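/- Let k and q be natural numbers with q > k ≥ 1, and let λ > 1. For each r ∈ {1,…,k}, let t^{(r)} : ℕ → ℝ be a sequence with t^{(r)}_i ≥ 1 for all i (an ORC strategy). If for every real x ≥ 1 the total number of pairs (r, i) such that x ≤ t^{(r)}_i and ((λ-1)/2)·x ≥ t^{(r)}_1 + ⋯ + t^{(r)}_{i-1} is at least q, then λ ≥ 2·(q^q/((q-k)^{q-k} · k^k))^{1/k} + 1. -/

import Mathlib

set_option maxHeartbeats 1000000

open Finset

/-- Weighted AM-GM consequence: polynomial form of the key inequality. -/
lemma orc_poly (k q : ℕ) (hk : 1 ≤ k) (hkq : k < q) {ρ : ℝ} (hρ : 1 ≤ ρ) :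
    (q : ℝ) ^ q * (ρ - 1) ^ k ≤ ρ ^ q * ((q - k : ℕ) : ℝ) ^ (q - k) * (k : ℝ) ^ k := by
  set p : ℕ := q - k with hp
  have hpk : p + k = q := Nat.sub_add_cancel hkq.le
  have hp1 : 1 ≤ p := by omega
  have hq0 : (0:ℝ) < (q:ℕ) := by exact_mod_cast Nat.lt_of_lt_of_le (by omega) hkq.le
  have hp0 : (0:ℝ) < (p:ℕ) := by exact_mod_cast hp1
  have hk0 : (0:ℝ) < (k:ℕ) := by exact_mod_cast hk
  have hρ1 : (0:ℝ) ≤ ρ - 1 := by linarith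
  set a : ℝ := (q:ℝ) / p with ha
  set b : ℝ := (q:ℝ) * (ρ - 1) / k with hb
  have ha0 : 0 ≤ a := by positivity
  have hb0 : 0 ≤ b := by positivity
  have hw1 : (0:ℝ) ≤ (p:ℝ)/q := by positivity
  have hw2 : (0:ℝ) ≤ (k:ℝ)/q := by positivity
  have hw : (p:ℝ)/q + (k:ℝ)/q = 1 := by
    field_simp
    exact_mod_cast hpk
  have hgm := Real.geom_mean_le_arith_mean2_weighted hw1 hw2 ha0 hb0 hw
  have hrhs : (p:ℝ)/q * a + (k:ℝ)/q * b = ρ := by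
    rw [ha, hb]
    field_simp
    ring
  rw [hrhs] at hgm
  -- raise both sides to the q-th power
  have hgmq : (a ^ ((p:ℝ)/q) * b ^ ((k:ℝ)/q)) ^ q ≤ ρ ^ q := by
    apply pow_le_pow_left₀ (by positivity) hgm _
  have hL : (a ^ ((p:ℝ)/q) * b ^ ((k:ℝ)/q)) ^ q = a ^ p * b ^ k := by
    rw [← Real.rpow_natCast (a ^ ((p:ℝ)/q) * b ^ ((k:ℝ)/q)) q]
    rw [Real.mul_rpow (by positivity) (by positivity)]
    rw [← Real.rpow_natCast a p, ← Real.rpow_natCast b k]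
    rw [← Real.rpow_mul ha0, ← Real.rpow_mul hb0]
    rw [div_mul_cancel₀, div_mul_cancel₀] <;> positivity
  rw [hL] at hgmq
  -- multiply by p^p * k^k
  have hmul : (a ^ p * b ^ k) * ((p:ℝ) ^ p * (k:ℝ) ^ k) = (q:ℝ) ^ q * (ρ - 1) ^ k := by
    rw [ha, hb, div_pow, div_pow, mul_pow]
    field_simp
    rw [← pow_add, hpk]; ring
  have := mul_le_mul_of_nonneg_right hgmq (by positivity : (0:ℝ) ≤ (p:ℝ) ^ p * (k:ℝ) ^ k)
  rw [hmul] at this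
  calc (q : ℝ) ^ q * (ρ - 1) ^ k ≤ ρ ^ q * ((p:ℝ) ^ p * (k:ℝ) ^ k) := this
    _ = ρ ^ q * ((q - k:ℕ) : ℝ) ^ (q-k) * (k : ℝ) ^ k := by rw [← hp]; ring

/-- Telescoping sum of log differences. -/
lemma orc_telescope (C D : ℕ → ℝ) (hCpos : ∀ i, 0 < C i) (hCD : ∀ i, C i ≤ D i)
    (hDC : ∀ i, D i ≤ C (i + 1)) (M : ℕ) (hM : 1 ≤ M) :
    ∑ i ∈ Finset.range M, (Real.log (D i) - Real.log (C i))
      ≤ Real.log (D (M - 1)) - Real.log (C 0) := by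
  induction M with
  | zero => omega
  | succ M ih =>
    rcases Nat.eq_or_lt_of_le hM with h1 | h1
    · simp [← h1]
    · have hM' : 1 ≤ M := by omega
      rw [Finset.sum_range_succ]
      have h2 : Real.log (D (M - 1)) ≤ Real.log (C M) := by
        apply Real.log_le_log (lt_of_lt_of_le (hCpos _) (hCD _))
        have := hDC (M-1)
        rwa [Nat.sub_add_cancel hM'] at this
      have := ih hM'
      simp only [Nat.add_sub_cancel]
      linarith

/-- Counting integers j with A ≤ j h ≤ B. -/
lemma orc_count (J : Finset ℕ) (h A B : ℝ) (hh : 0 < h)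
    (hmem : ∀ j ∈ J, A ≤ j * h ∧ (j : ℝ) * h ≤ B) :
    (J.card : ℝ) ≤ max 0 (B - A) / h + 1 := by
  rcases J.eq_empty_or_nonempty with rfl | hne
  · simp
    positivity
  · set j0 := J.min' hne with hj0
    set j1 := J.max' hne with hj1
    have hj01 : j0 ≤ j1 := J.min'_le _ (J.max'_mem hne)
    have hsub : J ⊆ Finset.Icc j0 j1 := by
      intro j hj
      exact Finset.mem_Icc.mpr ⟨J.min'_le j hj, J.le_max' j hj⟩
    have hcard : J.card ≤ j1 + 1 - j0 := by
      calc J.card ≤ (Finset.Icc j0 j1).card := Finset.card_le_card hsub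
        _ = j1 + 1 - j0 := Nat.card_Icc j0 j1
    have hcast : (J.card : ℝ) ≤ (j1 : ℝ) - j0 + 1 := by
      have : ((j1 + 1 - j0 : ℕ) : ℝ) = (j1 : ℝ) - j0 + 1 := by
        rw [Nat.cast_sub (by omega)]
        push_cast; ring
      calc (J.card : ℝ) ≤ ((j1 + 1 - j0 : ℕ) : ℝ) := by exact_mod_cast hcard
        _ = (j1 : ℝ) - j0 + 1 := this
    have h0 := hmem j0 (J.min'_mem hne)
    have h1 := hmem j1 (J.max'_mem hne)
    have hd : ((j1 : ℝ) - j0) * h ≤ B - A := by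
      have := h1.2; have := h0.1
      nlinarith
    have : (j1 : ℝ) - j0 ≤ (B - A) / h := (le_div_iff₀ hh).mpr hd
    have hBA : B - A ≤ max 0 (B - A) := le_max_right _ _
    have : (j1:ℝ) - j0 ≤ max 0 (B-A) / h :=
      le_trans this (by gcongr)
    linarith

/-- Simple Archimedean limit lemma. -/
lemma orc_limit (A K₁ K₂ : ℝ) (hK₂ : 0 ≤ K₂) (h : ∀ n : ℕ, 1 ≤ n → A ≤ K₁ + K₂ / n) :
    A ≤ K₁ := by
  by_contra hc
  push_neg at hc
  obtain ⟨n, hn⟩ := exists_nat_gt (max 1 (K₂ / (A - K₁)))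
  have hn1 : 1 ≤ n := by
    have := lt_of_le_of_lt (le_max_left 1 _) hn
    exact_mod_cast this.le
  have hAK : 0 < A - K₁ := by linarith
  have hn0 : (0:ℝ) < n := by positivity
  have h2 : K₂ / (A - K₁) < n := lt_of_le_of_lt (le_max_right _ _) hn
  have h3 : K₂ / n < A - K₁ := by
    rw [div_lt_iff₀ hn0]
    rw [div_lt_iff₀ hAK] at h2
    linarith [h2]
  have := h n hn1
  linarith

section MainProof

/-- Lower bound for `q`-fold covering of `[1,∞)` with `k` robots in the
one-ray-cover-with-returns (ORC) setting.  Each robot `r` has a sequence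
`t r : ℕ → ℝ` of turning points (all `≥ 1`); a point `x ≥ 1` is `λ`-covered in
round `i` iff `x ≤ t r i` and `t r 0 + ⋯ + t r (i-1) ≤ ((λ-1)/2)·x`.  If every
`x ≥ 1` is covered in at least `q` rounds (counted with multiplicity over all
robots and rounds), then `λ ≥ 2 (q^q/((q-k)^(q-k) k^k))^(1/k) + 1`. -/
theorem orc_cover_lower_bound
    (k q : ℕ) (hk : 1 ≤ k) (hkq : k < q)
    (lam : ℝ) (hlam : 1 < lam)
    (t : Fin k → ℕ → ℝ)
    (ht : ∀ r i, 1 ≤ t r i)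
    (hcov : ∀ x : ℝ, 1 ≤ x →
      q ≤ {p : Fin k × ℕ | x ≤ t p.1 p.2 ∧
            (∑ j ∈ Finset.range p.2, t p.1 j) ≤ ((lam - 1) / 2) * x}.ncard) :
    2 * ((q : ℝ) ^ q / (((q - k : ℕ) : ℝ) ^ (q - k) * (k : ℝ) ^ k)) ^ ((1 : ℝ) / k) + 1
      ≤ lam := by
  classical
  by_contra hcon
  push_neg at hcon
  set Q : ℝ := ((q : ℝ) ^ q / (((q - k : ℕ) : ℝ) ^ (q - k) * (k : ℝ) ^ k)) ^ ((1 : ℝ) / k)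
    with hQdef
  set μ : ℝ := (lam - 1) / 2 with hμdef
  have hμ0 : 0 < μ := by rw [hμdef]; linarith
  have hkR : (0:ℝ) < (k:ℕ) := by exact_mod_cast hk
  have hqR : (0:ℝ) < (q:ℕ) := by exact_mod_cast (by omega : 0 < q)
  have hqk1 : 1 ≤ q - k := by omega
  have hqkR : (0:ℝ) < ((q - k : ℕ) : ℝ) := by exact_mod_cast hqk1
  have hbase0 : (0:ℝ) < (q : ℝ) ^ q / (((q - k : ℕ) : ℝ) ^ (q - k) * (k : ℝ) ^ k) := by
    positivity
  have hQ0 : 0 < Q := Real.rpow_pos_of_pos hbase0 _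
  have hμQ : μ < Q := by rw [hμdef]; linarith
  -- key analytic inequality
  have hQk : Q ^ k = (q : ℝ) ^ q / (((q - k : ℕ) : ℝ) ^ (q - k) * (k : ℝ) ^ k) := by
    rw [hQdef, ← Real.rpow_natCast (_ ^ ((1:ℝ)/k)) k, ← Real.rpow_mul hbase0.le,
      one_div, inv_mul_cancel₀ hkR.ne', Real.rpow_one]
  have hKAL : ∀ ρ : ℝ, 1 ≤ ρ → Q * (ρ - 1) ≤ ρ ^ ((q:ℝ)/k) := by
    intro ρ hρ
    have hρ0 : (0:ℝ) < ρ := by linarith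
    have hpoly := orc_poly k q hk hkq hρ
    have hrk : (ρ ^ ((q:ℝ)/k)) ^ k = ρ ^ q := by
      rw [← Real.rpow_natCast (ρ ^ ((q:ℝ)/k)) k, ← Real.rpow_mul hρ0.le,
        div_mul_cancel₀ _ hkR.ne', Real.rpow_natCast]
    have h1 : (Q * (ρ - 1)) ^ k ≤ (ρ ^ ((q:ℝ)/k)) ^ k := by
      rw [mul_pow, hQk, hrk, div_mul_eq_mul_div, div_le_iff₀ (by positivity)]
      calc (q:ℝ) ^ q * (ρ-1)^k ≤ ρ ^ q * ((q - k:ℕ):ℝ) ^ (q-k) * (k:ℝ) ^ k := hpoly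
        _ = ρ ^ q * (((q - k:ℕ):ℝ) ^ (q-k) * (k:ℝ) ^ k) := by ring
    have hQρ0 : 0 ≤ Q * (ρ - 1) := by
      have : 0 ≤ ρ - 1 := by linarith
      positivity
    exact (pow_le_pow_iff_left₀ hQρ0 (by positivity) (by omega)).mp h1
  set δ : ℝ := Real.log (Q / μ) with hδdef
  have hδ0 : 0 < δ := Real.log_pos ((one_lt_div hμ0).mpr hμQ)
  have hKALμ : ∀ ρ : ℝ, 1 ≤ ρ → μ * (ρ - 1) ≤ (μ / Q) * ρ ^ ((q:ℝ)/k) := by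
    intro ρ hρ
    have h1 := hKAL ρ hρ
    have h2 : μ * (ρ - 1) = (μ / Q) * (Q * (ρ - 1)) := by field_simp
    rw [h2]
    exact mul_le_mul_of_nonneg_left h1 (by positivity)
  -- basic objects
  set v : Fin k × ℕ → ℝ := fun e => t e.1 e.2 with hvdef
  set b : Fin k × ℕ → ℝ := fun e => ∑ j ∈ Finset.range e.2, t e.1 j with hbdef
  have hv1 : ∀ e, 1 ≤ v e := fun e => ht e.1 e.2
  have hbnn : ∀ e, 0 ≤ b e := by
    intro e
    apply Finset.sum_nonneg
    intro j _; linarith [ht e.1 j]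
  have hbi : ∀ e : Fin k × ℕ, (e.2 : ℝ) ≤ b e := by
    intro e
    calc (e.2 : ℝ) = ∑ _j ∈ Finset.range e.2, (1:ℝ) := by simp
      _ ≤ b e := Finset.sum_le_sum (fun j _ => ht e.1 j)
  have hbsucc : ∀ (r : Fin k) (i : ℕ), b (r, i+1) = b (r, i) + v (r, i) := by
    intro r i
    simp only [hbdef, hvdef]
    exact Finset.sum_range_succ _ _
  have hbmono : ∀ (r : Fin k) (i j : ℕ), i ≤ j → b (r, i) ≤ b (r, j) := by
    intro r i j hij
    apply Finset.sum_le_sum_of_subset_of_nonneg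
    · exact Finset.range_subset_range.mpr hij
    · intro l _ _; linarith [ht r l]
  have hbstrict : ∀ (r : Fin k) (i j : ℕ), i < j → b (r, i) + 1 ≤ b (r, j) := by
    intro r i j hij
    calc b (r, i) + 1 ≤ b (r, i) + v (r, i) := by linarith [hv1 (r, i)]
      _ = b (r, i+1) := (hbsucc r i).symm
      _ ≤ b (r, j) := hbmono r (i+1) j hij
  -- machinery
  set w : ℝ → (Fin k × ℕ) → ℝ := fun G e => min (v e) G with hwdef
  set Cc : (Fin k × ℕ) → ℝ := fun e => max (b e) μ with hCdef
  set Dd : ℝ → (Fin k × ℕ) → ℝ := fun G e => max (b e + w G e) μ with hDdef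
  set τ : ℝ → (Fin k × ℕ) → ℝ := fun G e => max 0 (Real.log (μ * w G e / Cc e)) with hτdef
  set slop : (Fin k × ℕ) → ℝ := fun e => if b e < μ then Real.log (v e) else 0 with hslopdef
  set Act : ℝ → (Fin k × ℕ) → Prop := fun G e => μ ≤ b e ∧ Cc e < μ * w G e with hActdef
  set UU : ℝ → Finset (Fin k × ℕ) := fun G => Finset.univ ×ˢ Finset.range (⌊μ*G⌋₊ + 1)
    with hUdef
  set A : ℝ → ℕ := fun G => ((UU G).filter (Act G)).card with hAdef
  set C₁ : ℝ := Real.log (μ+1) - Real.log μ with hC₁def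
  set C₄ : ℝ := ∑ e ∈ Finset.univ ×ˢ Finset.range ⌈μ⌉₊, Real.log (v e) with hC₄def
  have hC₁0 : 0 ≤ C₁ := by
    rw [hC₁def]; have := Real.log_le_log hμ0 (by linarith : μ ≤ μ + 1); linarith
  have hC₄0 : 0 ≤ C₄ := by
    apply Finset.sum_nonneg
    intro e _; exact Real.log_nonneg (hv1 e)
  have hCpos : ∀ e, 0 < Cc e := fun e => lt_of_lt_of_le hμ0 (le_max_right _ _)
  have hw1 : ∀ (G : ℝ), 1 ≤ G → ∀ e, 1 ≤ w G e := by
    intro G hG e; exact le_min (hv1 e) hG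
  have hτnn : ∀ G e, 0 ≤ τ G e := fun G e => le_max_left _ _
  -- per round inequality
  have hper : ∀ (G : ℝ), 2 ≤ G → ∀ e, τ G e ≤
      ((q:ℝ)/k) * (Real.log (Dd G e) - Real.log (Cc e)) + slop e
        - δ * (if Act G e then 1 else 0) := by
    intro G hG e
    have hG1 : (1:ℝ) ≤ G := by linarith
    have hwe1 : 1 ≤ w G e := hw1 G hG1 e
    have hwe0 : 0 < w G e := by linarith
    have hCD : Cc e ≤ Dd G e := by
      apply max_le_max _ le_rfl
      linarith
    have hDpos : 0 < Dd G e := lt_of_lt_of_le (hCpos e) hCD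
    have hlogCD : 0 ≤ Real.log (Dd G e) - Real.log (Cc e) := by
      have := Real.log_le_log (hCpos e) hCD; linarith
    have hqk0 : (0:ℝ) ≤ (q:ℝ)/k := by positivity
    by_cases hcheap : b e < μ
    · -- cheap round
      have hact : ¬ Act G e := by
        rw [hActdef]; push_neg; intro h; linarith
      have hC : Cc e = μ := max_eq_right hcheap.le
      have hτ : τ G e = Real.log (w G e) := by
        have harg : μ * w G e / Cc e = w G e := by
          rw [hC, mul_comm, mul_div_assoc, div_self hμ0.ne', mul_one]
        show max 0 (Real.log (μ * w G e / Cc e)) = Real.log (w G e)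
        rw [harg]
        exact max_eq_right (Real.log_nonneg hwe1)
      have hslop : slop e = Real.log (v e) := if_pos hcheap
      have hwv : Real.log (w G e) ≤ Real.log (v e) :=
        Real.log_le_log hwe0 (min_le_left _ _)
      rw [hτ, hslop, if_neg hact]
      have : (0:ℝ) ≤ ((q:ℝ)/k) * (Real.log (Dd G e) - Real.log (Cc e)) :=
        mul_nonneg hqk0 hlogCD
      linarith
    · push_neg at hcheap
      have hC : Cc e = b e := max_eq_left hcheap
      have hslop : slop e = 0 := if_neg (not_lt.mpr hcheap)
      by_cases hact : Cc e < μ * w G e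
      · -- active round
        have hActe : Act G e := ⟨hcheap, hact⟩
        have harg1 : 1 < μ * w G e / Cc e := (one_lt_div (hCpos e)).mpr hact
        have hτ : τ G e = Real.log (μ * w G e / Cc e) :=
          max_eq_right (Real.log_nonneg harg1.le)
        set ρ : ℝ := Dd G e / Cc e with hρdef
        have hρ1 : 1 ≤ ρ := (one_le_div (hCpos e)).mpr hCD
        have hwDC : w G e ≤ Dd G e - Cc e := by
          have : b e + w G e ≤ Dd G e := le_max_left _ _
          rw [hC]; linarith
        have hkey : μ * w G e / Cc e ≤ (μ / Q) * ρ ^ ((q:ℝ)/k) := by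
          have h1 : μ * w G e ≤ μ * (Dd G e - Cc e) := by
            apply mul_le_mul_of_nonneg_left hwDC hμ0.le
          have h2 : μ * (Dd G e - Cc e) = Cc e * (μ * (ρ - 1)) := by
            rw [hρdef]; field_simp
            rw [mul_sub, mul_div_cancel₀ _ (hCpos e).ne', mul_one]
          have h3 := hKALμ ρ hρ1
          rw [div_le_iff₀ (hCpos e)]
          calc μ * w G e ≤ Cc e * (μ * (ρ - 1)) := by rw [← h2]; exact h1
            _ ≤ Cc e * ((μ / Q) * ρ ^ ((q:ℝ)/k)) :=
                mul_le_mul_of_nonneg_left h3 (hCpos e).le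
            _ = μ / Q * ρ ^ ((q:ℝ)/k) * Cc e := by ring
        have hρpos : (0:ℝ) < ρ := by linarith
        have hlog : Real.log (μ * w G e / Cc e) ≤
            Real.log (μ / Q) + ((q:ℝ)/k) * Real.log ρ := by
          calc Real.log (μ * w G e / Cc e) ≤ Real.log ((μ / Q) * ρ ^ ((q:ℝ)/k)) :=
              Real.log_le_log (by linarith) hkey
            _ = Real.log (μ / Q) + Real.log (ρ ^ ((q:ℝ)/k)) :=
              Real.log_mul (by positivity) (by positivity)
            _ = Real.log (μ / Q) + ((q:ℝ)/k) * Real.log ρ := by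
              rw [Real.log_rpow hρpos]
        have hμQδ : Real.log (μ / Q) = -δ := by
          rw [hδdef, ← Real.log_inv, inv_div]
        have hlogρ : Real.log ρ = Real.log (Dd G e) - Real.log (Cc e) := by
          rw [hρdef, Real.log_div hDpos.ne' (hCpos e).ne']
        rw [hτ, if_pos hActe, hslop]
        rw [hμQδ, hlogρ] at hlog
        linarith
      · -- inactive rich round
        have hτ : τ G e = 0 := by
          apply max_eq_left
          apply Real.log_nonpos (by positivity)
          rw [div_le_one (hCpos e)]
          exact not_lt.mp hact
        have hActe : ¬ Act G e := fun h => hact h.2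
        rw [hτ, hslop, if_neg hActe]
        have : (0:ℝ) ≤ ((q:ℝ)/k) * (Real.log (Dd G e) - Real.log (Cc e)) :=
          mul_nonneg hqk0 hlogCD
        linarith
  -- main counting bound
  have hboundA : ∀ (G : ℝ), 2 ≤ G → ∀ n : ℕ, 1 ≤ n →
      δ * (A G : ℝ) ≤ q * C₁ + C₄ + (Real.log G / n) * (k * (μ * G + 1)) := by
    intro G hG n hn
    have hG1 : (1:ℝ) ≤ G := by linarith
    have hG0 : (0:ℝ) < G := by linarith
    have hlogG : 0 < Real.log G := Real.log_pos (by linarith)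
    have hn0 : (0:ℝ) < (n:ℝ) := by exact_mod_cast hn
    set h : ℝ := Real.log G / n with hhdef
    have hh0 : 0 < h := by positivity
    set g : ℕ → ℝ := fun j => Real.exp (j * h) with hgdef
    have hg1 : ∀ j, 1 ≤ g j := fun j => Real.one_le_exp (by positivity)
    have hg0 : ∀ j, 0 < g j := fun j => Real.exp_pos _
    have hgN : g n = G := by
      show Real.exp ((n:ℝ) * h) = G
      have : (n:ℝ) * h = Real.log G := by rw [hhdef]; field_simp
      rw [this, Real.exp_log hG0]
    have hgle : ∀ j, j ≤ n → g j ≤ G := by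
      intro j hj
      rw [← hgN]
      apply Real.exp_le_exp.mpr
      apply mul_le_mul_of_nonneg_right _ hh0.le
      exact_mod_cast hj
    have hloggj : ∀ j, Real.log (g j) = j * h := fun j => Real.log_exp _
    set Mmax : ℕ := ⌊μ*G⌋₊ + 1 with hMmaxdef
    set Cov : ℝ → (Fin k × ℕ) → Prop := fun x e => x ≤ v e ∧ b e ≤ μ * x with hCovdef
    -- coverage at grid points
    have hqle : ∀ j ∈ Finset.range (n+1), (q:ℕ) ≤ ((UU G).filter (Cov (g j))).card := by
      intro j hj
      rw [Finset.mem_range] at hj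
      have hgj1 : 1 ≤ g j := hg1 j
      have hgjG : g j ≤ G := hgle j (by omega)
      have h1 := hcov (g j) hgj1
      have hsetF : {p : Fin k × ℕ | g j ≤ t p.1 p.2 ∧
          (∑ l ∈ Finset.range p.2, t p.1 l) ≤ μ * g j} = ↑((UU G).filter (Cov (g j))) := by
        ext e
        simp only [Set.mem_setOf_eq, Finset.coe_filter, Finset.mem_product,
          Finset.mem_univ, true_and, Finset.mem_range, hCovdef, hvdef, hbdef]
        constructor
        · rintro ⟨h2, h3⟩
          refine ⟨?_, h2, h3⟩
          have h4 : (e.2 : ℝ) ≤ μ * G := by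
            have := hbi e
            have h5 : μ * g j ≤ μ * G := mul_le_mul_of_nonneg_left hgjG hμ0.le
            simp only [hbdef] at this
            linarith
          have h6 : e.2 ≤ ⌊μ*G⌋₊ := Nat.le_floor h4
          show e ∈ Finset.univ ×ˢ Finset.range (⌊μ*G⌋₊ + 1)
          rw [Finset.mem_product, Finset.mem_range]
          exact ⟨Finset.mem_univ _, by omega⟩
        · rintro ⟨_, h2, h3⟩
          exact ⟨h2, h3⟩
      rw [hsetF, Set.ncard_coe_finset] at h1
      exact h1
    -- double counting
    have hswap : ∑ j ∈ Finset.range (n+1), ((UU G).filter (Cov (g j))).card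
        = ∑ e ∈ UU G, ((Finset.range (n+1)).filter (fun j => Cov (g j) e)).card := by
      simp only [Finset.card_filter]
      exact Finset.sum_comm
    -- per-event grid count
    have hcount : ∀ e ∈ UU G,
        ((((Finset.range (n+1)).filter (fun j => Cov (g j) e)).card : ℕ) : ℝ)
          ≤ τ G e / h + 1 := by
      intro e _
      have hwe1 : 1 ≤ w G e := hw1 G hG1 e
      have hwe0 : (0:ℝ) < w G e := by linarith
      have hkey := orc_count ((Finset.range (n+1)).filter (fun j => Cov (g j) e)) h
        (Real.log (Cc e) - Real.log μ) (Real.log (w G e)) hh0 ?_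
      · have hBA : max 0 (Real.log (w G e) - (Real.log (Cc e) - Real.log μ)) = τ G e := by
          show _ = max 0 (Real.log (μ * w G e / Cc e))
          congr 1
          rw [Real.log_div (by positivity) (hCpos e).ne',
            Real.log_mul hμ0.ne' hwe0.ne']
          ring
        rw [hBA] at hkey
        exact hkey
      · intro j hj
        rw [Finset.mem_filter, Finset.mem_range] at hj
        obtain ⟨hjn, hcv⟩ := hj
        have hcv1 : g j ≤ v e := hcv.1
        have hcv2 : b e ≤ μ * g j := hcv.2
        constructor
        · have h1 : Cc e ≤ μ * g j := by
            apply max_le hcv2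
            nlinarith [hg1 j]
          have h2 : Real.log (Cc e) ≤ Real.log μ + j * h := by
            calc Real.log (Cc e) ≤ Real.log (μ * g j) := Real.log_le_log (hCpos e) h1
              _ = Real.log μ + Real.log (g j) := Real.log_mul hμ0.ne' (hg0 j).ne'
              _ = Real.log μ + j * h := by rw [hloggj]
          linarith
        · have h1 : g j ≤ w G e := le_min hcv1 (hgle j (by omega))
          have h2 := Real.log_le_log (hg0 j) h1
          rw [hloggj] at h2
          exact h2
    -- assemble coverage inequality
    have hq2 : (q:ℝ) * (n+1) ≤ (∑ e ∈ UU G, τ G e) / h + ((UU G).card : ℝ) := by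
      have h1n : q * (n+1) ≤ ∑ j ∈ Finset.range (n+1), ((UU G).filter (Cov (g j))).card := by
        calc q * (n+1) = ∑ _j ∈ Finset.range (n+1), q := by
              rw [Finset.sum_const, Finset.card_range, smul_eq_mul, mul_comm]
          _ ≤ _ := Finset.sum_le_sum hqle
      rw [hswap] at h1n
      have h2 : ((∑ e ∈ UU G, ((Finset.range (n+1)).filter (fun j => Cov (g j) e)).card : ℕ) : ℝ)
          ≤ ∑ e ∈ UU G, (τ G e / h + 1) := by
        rw [Nat.cast_sum]
        exact Finset.sum_le_sum hcount
      have h3 : ∑ e ∈ UU G, (τ G e / h + 1) = (∑ e ∈ UU G, τ G e) / h + ((UU G).card : ℝ) := by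
        rw [Finset.sum_add_distrib, Finset.sum_div]
        simp
      have h4 : (q:ℝ) * (n+1) ≤ ((∑ e ∈ UU G, ((Finset.range (n+1)).filter (fun j => Cov (g j) e)).card : ℕ) : ℝ) := by
        calc (q:ℝ) * (n+1) = ((q * (n+1) : ℕ) : ℝ) := by push_cast; ring
          _ ≤ _ := by exact_mod_cast h1n
      linarith
    -- per-robot telescoping bound
    have hwit : ∀ r : Fin k, μ * G < b (r, Mmax) := by
      intro r
      have h1 := hbi (r, Mmax)
      have h2 : μ * G < (Mmax:ℝ) := by
        rw [hMmaxdef]; push_cast; exact Nat.lt_floor_add_one _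
      exact lt_of_lt_of_le h2 h1
    have hex : ∀ r : Fin k, ∃ i : ℕ, μ * G < b (r, i) := fun r => ⟨Mmax, hwit r⟩
    set M : Fin k → ℕ := fun r => Nat.find (hex r) with hMdef
    have hMle : ∀ r, M r ≤ Mmax := fun r => Nat.find_le (hwit r)
    have hMpos : ∀ r, 0 < M r := by
      intro r
      rcases Nat.eq_zero_or_pos (M r) with h0 | h
      · exfalso
        have hspec : μ * G < b (r, M r) := Nat.find_spec (hex r)
        rw [h0] at hspec
        have : b (r, 0) = 0 := by simp [hbdef]
        nlinarith
      · exact h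
    have hMlow : ∀ r, ∀ i, i < M r → b (r,i) ≤ μ * G :=
      fun r i hi => not_lt.mp (Nat.find_min (hex r) hi)
    have hMhigh : ∀ r i, M r ≤ i → μ * G < b (r, i) :=
      fun r i hi => lt_of_lt_of_le (Nat.find_spec (hex r)) (hbmono r _ _ hi)
    have hvanish : ∀ r i, M r ≤ i →
        τ G (r,i) = 0 ∧ slop (r,i) = 0 ∧ ¬ Act G (r,i) := by
      intro r i hi
      have hb1 : μ * G < b (r,i) := hMhigh r i hi
      have hμG : μ ≤ μ * G := le_mul_of_one_le_right hμ0.le hG1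
      have hC : Cc (r,i) = b (r,i) := max_eq_left (by linarith)
      have hww : μ * w G (r,i) ≤ μ * G :=
        mul_le_mul_of_nonneg_left (min_le_right _ _) hμ0.le
      have hwe1 : 1 ≤ w G (r,i) := hw1 G hG1 _
      refine ⟨?_, ?_, ?_⟩
      · apply max_eq_left
        apply Real.log_nonpos (by positivity)
        rw [div_le_one (hCpos _), hC]
        linarith
      · exact if_neg (not_lt.mpr (by linarith))
      · rintro ⟨h1, h2⟩
        rw [hC] at h2
        linarith
    have hsplit : ∀ (f : Fin k × ℕ → ℝ), (∀ r i, M r ≤ i → f (r,i) = 0) →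
        ∀ r, ∑ i ∈ Finset.range Mmax, f (r,i) = ∑ i ∈ Finset.range (M r), f (r,i) := by
      intro f hf r
      have h2 := Finset.sum_Ico_consecutive (fun i => f (r,i)) (Nat.zero_le (M r)) (hMle r)
      have h0 : ∑ i ∈ Finset.Ico (M r) Mmax, f (r,i) = 0 :=
        Finset.sum_eq_zero (fun i hi => hf r i (Finset.mem_Ico.mp hi).1)
      rw [Finset.range_eq_Ico, ← h2, h0, add_zero, Finset.range_eq_Ico]
    have hrobot : ∀ r : Fin k, ∑ i ∈ Finset.range Mmax, τ G (r,i) ≤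
        ((q:ℝ)/k) * (Real.log G + C₁) + (∑ i ∈ Finset.range Mmax, slop (r,i))
          - δ * (∑ i ∈ Finset.range Mmax, (if Act G (r,i) then (1:ℝ) else 0)) := by
      intro r
      rw [hsplit (fun e => τ G e) (fun r i hi => (hvanish r i hi).1) r,
          hsplit (fun e => slop e) (fun r i hi => (hvanish r i hi).2.1) r,
          hsplit (fun e => if Act G e then (1:ℝ) else 0)
            (fun r i hi => if_neg (hvanish r i hi).2.2) r]
      have hstep : ∑ i ∈ Finset.range (M r), τ G (r,i) ≤
          ∑ i ∈ Finset.range (M r), (((q:ℝ)/k) * (Real.log (Dd G (r,i)) - Real.log (Cc (r,i)))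
            + slop (r,i) - δ * (if Act G (r,i) then 1 else 0)) :=
        Finset.sum_le_sum (fun i _ => hper G hG (r,i))
      have hCD' : ∀ i : ℕ, Cc (r,i) ≤ Dd G (r,i) := by
        intro i
        apply max_le_max _ le_rfl
        have := hw1 G hG1 (r,i)
        linarith
      have hDC' : ∀ i : ℕ, Dd G (r,i) ≤ Cc (r,(i+1)) := by
        intro i
        apply max_le_max _ le_rfl
        rw [hbsucc r i]
        have : w G (r,i) ≤ v (r,i) := min_le_left _ _
        linarith
      have htel := orc_telescope (fun i => Cc (r,i)) (fun i => Dd G (r,i))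
        (fun i => hCpos _) hCD' hDC' (M r) (hMpos r)
      have hC0 : Cc (r, 0) = μ := by
        have hb0 : b (r,0) = 0 := by simp [hbdef]
        show max (b (r,0)) μ = μ
        rw [hb0]
        exact max_eq_right hμ0.le
      have hDpos : 0 < Dd G (r, M r - 1) := lt_of_lt_of_le (hCpos _) (hCD' _)
      have hDend : Real.log (Dd G (r, M r - 1)) ≤ Real.log ((μ+1) * G) := by
        apply Real.log_le_log hDpos
        have hblt : b (r, M r - 1) ≤ μ * G := hMlow r _ (Nat.sub_lt (hMpos r) one_pos)
        have hwle : w G (r, M r - 1) ≤ G := min_le_right _ _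
        apply max_le
        · nlinarith
        · nlinarith
      have hlogμG : Real.log ((μ+1)*G) - Real.log μ = Real.log G + C₁ := by
        rw [Real.log_mul (by positivity) hG0.ne', hC₁def]
        ring
      have hdecomp : ∑ i ∈ Finset.range (M r), (((q:ℝ)/k) * (Real.log (Dd G (r,i)) - Real.log (Cc (r,i)))
            + slop (r,i) - δ * (if Act G (r,i) then 1 else 0))
          = ((q:ℝ)/k) * (∑ i ∈ Finset.range (M r), (Real.log (Dd G (r,i)) - Real.log (Cc (r,i))))
            + (∑ i ∈ Finset.range (M r), slop (r,i))
            - δ * (∑ i ∈ Finset.range (M r), (if Act G (r,i) then (1:ℝ) else 0)) := by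
        rw [Finset.sum_sub_distrib, Finset.sum_add_distrib, ← Finset.mul_sum, ← Finset.mul_sum]
      have hqk0 : (0:ℝ) ≤ (q:ℝ)/k := by positivity
      have htel2 : ((q:ℝ)/k) * (∑ i ∈ Finset.range (M r), (Real.log (Dd G (r,i)) - Real.log (Cc (r,i))))
          ≤ ((q:ℝ)/k) * (Real.log G + C₁) := by
        apply mul_le_mul_of_nonneg_left _ hqk0
        calc ∑ i ∈ Finset.range (M r), (Real.log (Dd G (r,i)) - Real.log (Cc (r,i)))
            ≤ Real.log (Dd G (r, M r - 1)) - Real.log (Cc (r, 0)) := htel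
          _ ≤ Real.log ((μ+1)*G) - Real.log μ := by rw [hC0]; linarith
          _ = Real.log G + C₁ := hlogμG
      rw [hdecomp] at hstep
      linarith
    -- global sums
    have hUprod : ∀ (f : Fin k × ℕ → ℝ), ∑ e ∈ UU G, f e
        = ∑ r : Fin k, ∑ i ∈ Finset.range Mmax, f (r,i) := by
      intro f
      have hUG : UU G = Finset.univ ×ˢ Finset.range Mmax := rfl
      rw [hUG, Finset.sum_product]
    have hslopG : ∑ e ∈ UU G, slop e ≤ C₄ := by
      rw [hUprod, hC₄def, Finset.sum_product]
      apply Finset.sum_le_sum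
      intro r _
      have h1 : ∑ i ∈ Finset.range Mmax, slop (r,i)
          = ∑ i ∈ (Finset.range Mmax).filter (fun i => b (r,i) < μ), Real.log (v (r,i)) := by
        rw [Finset.sum_filter]
      have hsub : (Finset.range Mmax).filter (fun i => b (r,i) < μ) ⊆ Finset.range ⌈μ⌉₊ := by
        intro i hi
        rw [Finset.mem_filter] at hi
        rw [Finset.mem_range, Nat.lt_ceil]
        calc (i:ℝ) ≤ b (r,i) := hbi (r,i)
          _ < μ := hi.2
      rw [h1]
      exact Finset.sum_le_sum_of_subset_of_nonneg hsub
        (fun i _ _ => Real.log_nonneg (hv1 (r,i)))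
    have hactG : ∑ e ∈ UU G, (if Act G e then (1:ℝ) else 0) = (A G : ℝ) := by
      show _ = ((Finset.filter (Act G) (UU G)).card : ℝ)
      rw [Finset.card_filter, Nat.cast_sum]
      exact Finset.sum_congr rfl (fun e _ => by split <;> simp)
    have hτtotal : ∑ e ∈ UU G, τ G e ≤ (q:ℝ) * (Real.log G + C₁) + C₄ - δ * (A G : ℝ) := by
      have h1 : ∑ e ∈ UU G, τ G e ≤
          ∑ r : Fin k, (((q:ℝ)/k) * (Real.log G + C₁) + (∑ i ∈ Finset.range Mmax, slop (r,i))
            - δ * (∑ i ∈ Finset.range Mmax, (if Act G (r,i) then (1:ℝ) else 0))) := by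
        rw [hUprod (fun e => τ G e)]
        exact Finset.sum_le_sum (fun r _ => hrobot r)
      have h2 : ∑ r : Fin k, (((q:ℝ)/k) * (Real.log G + C₁) + (∑ i ∈ Finset.range Mmax, slop (r,i))
            - δ * (∑ i ∈ Finset.range Mmax, (if Act G (r,i) then (1:ℝ) else 0)))
          = (q:ℝ) * (Real.log G + C₁) + (∑ e ∈ UU G, slop e)
            - δ * (∑ e ∈ UU G, (if Act G e then (1:ℝ) else 0)) := by
        rw [Finset.sum_sub_distrib, Finset.sum_add_distrib, Finset.sum_const, Finset.card_univ,
          Fintype.card_fin, nsmul_eq_mul, ← Finset.mul_sum,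
          ← hUprod (fun e => slop e), ← hUprod (fun e => if Act G e then (1:ℝ) else 0)]
        have hkA : (k:ℝ) * ((q:ℝ)/k * (Real.log G + C₁)) = (q:ℝ) * (Real.log G + C₁) := by
          field_simp
        rw [hkA]
      rw [h2] at h1
      rw [hactG] at h1
      have hδA : δ * (A G : ℝ) = δ * (A G : ℝ) := rfl
      linarith [hslopG, mul_pos hδ0 (by positivity : (0:ℝ) < 1)]
    have hUcard : ((UU G).card : ℝ) ≤ (k:ℝ) * (μ * G + 1) := by
      have h1 : (UU G).card = k * Mmax := by
        show (Finset.univ ×ˢ Finset.range Mmax).card = k * Mmax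
        rw [Finset.card_product, Finset.card_univ, Fintype.card_fin, Finset.card_range]
      rw [h1, Nat.cast_mul]
      have h2 : (Mmax : ℝ) ≤ μ * G + 1 := by
        rw [hMmaxdef]
        push_cast
        have := Nat.floor_le (by positivity : (0:ℝ) ≤ μ*G)
        linarith
      exact mul_le_mul_of_nonneg_left h2 hkR.le
    -- final algebra
    have hτh : (∑ e ∈ UU G, τ G e) / h ≤
        ((q:ℝ) * (Real.log G + C₁) + C₄ - δ * (A G : ℝ)) / h := by
      gcongr
    have hfinal1 : (q:ℝ) * (n+1) ≤
        ((q:ℝ) * (Real.log G + C₁) + C₄ - δ * (A G : ℝ)) / h + (k:ℝ) * (μ * G + 1) := by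
      linarith
    have hXh : ((q:ℝ) * (Real.log G + C₁) + C₄ - δ * (A G : ℝ)) / h
        = (q:ℝ) * n + ((q:ℝ) * C₁ + C₄ - δ * (A G : ℝ)) / h := by
      rw [hhdef]
      field_simp
      ring
    rw [hXh] at hfinal1
    have h5 : (q:ℝ) - (k:ℝ)*(μ*G+1) ≤ ((q:ℝ) * C₁ + C₄ - δ * (A G : ℝ)) / h := by
      have : (q:ℝ) * (n+1) = (q:ℝ)*n + q := by ring
      linarith
    have h6 : ((q:ℝ) - (k:ℝ)*(μ*G+1)) * h ≤ (q:ℝ) * C₁ + C₄ - δ * (A G : ℝ) := by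
      rw [← div_mul_cancel₀ ((q:ℝ) * C₁ + C₄ - δ * (A G : ℝ)) hh0.ne']
      exact mul_le_mul_of_nonneg_right h5 hh0.le
    have h7 : ((q:ℝ) - (k:ℝ)*(μ*G+1))*h = (q:ℝ)*h - (k:ℝ)*(μ*G+1)*h := by ring
    have h8 : 0 ≤ (q:ℝ)*h := by positivity
    have h9 : (Real.log G / n) * ((k:ℝ) * (μ * G + 1)) = (k:ℝ)*(μ*G+1)*h := by
      rw [hhdef]; ring
    rw [h9]
    linarith
  have hAbound : ∀ (G : ℝ), 2 ≤ G → δ * (A G : ℝ) ≤ q * C₁ + C₄ := by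
    intro G hG
    apply orc_limit _ _ (Real.log G * (k * (μ * G + 1)))
    · have hlG : 0 ≤ Real.log G := Real.log_nonneg (by linarith)
      have : (0:ℝ) ≤ μ * G + 1 := by nlinarith
      positivity
    · intro n hn
      have := hboundA G hG n hn
      calc δ * (A G : ℝ) ≤ q * C₁ + C₄ + (Real.log G / n) * (k * (μ * G + 1)) := this
        _ = q * C₁ + C₄ + Real.log G * (k * (μ * G + 1)) / n := by ring
  -- finiteness of active set
  have hfin : {e : Fin k × ℕ | μ ≤ b e ∧ Cc e < μ * v e}.Finite := by
    rw [← Set.not_infinite]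
    intro hinf
    obtain ⟨F, hFsub, hFcard⟩ := hinf.exists_subset_card_eq (⌈(q * C₁ + C₄) / δ⌉₊ + 1)
    set G : ℝ := 2 + ∑ e ∈ F, (v e + b e / μ) with hGdef
    have hsumnn : ∀ e ∈ F, 0 ≤ v e + b e / μ := by
      intro e _
      have h1 := hv1 e
      have h2 := hbnn e
      have h3 : 0 ≤ b e / μ := div_nonneg (hbnn e) hμ0.le
      linarith
    have hG2 : 2 ≤ G := by
      rw [hGdef]
      have := Finset.sum_nonneg hsumnn
      linarith
    have hFsubU : F ⊆ (UU G).filter (Act G) := by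
      intro e heF
      obtain ⟨hact1, hact2⟩ := hFsub (Finset.mem_coe.mpr heF)
      have hterm : v e + b e / μ ≤ ∑ e' ∈ F, (v e' + b e' / μ) :=
        Finset.single_le_sum hsumnn heF
      have h3 : 0 ≤ b e / μ := div_nonneg (hbnn e) hμ0.le
      have hvG : v e ≤ G := by rw [hGdef]; linarith
      have hbG : b e ≤ μ * G := by
        have h4 : b e / μ ≤ G := by rw [hGdef]; linarith [hv1 e]
        rw [div_le_iff₀ hμ0] at h4
        linarith [h4]
      rw [Finset.mem_filter]
      constructor
      · show e ∈ Finset.univ ×ˢ Finset.range (⌊μ*G⌋₊ + 1)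
        rw [Finset.mem_product, Finset.mem_range]
        refine ⟨Finset.mem_univ _, ?_⟩
        have h5 : (e.2:ℝ) ≤ μ * G := le_trans (hbi e) hbG
        have h6 : e.2 ≤ ⌊μ*G⌋₊ := Nat.le_floor h5
        omega
      · refine ⟨hact1, ?_⟩
        show Cc e < μ * min (v e) G
        rw [min_eq_left hvG]
        exact hact2
    have hcard2 : F.card ≤ A G := Finset.card_le_card hFsubU
    have hAb := hAbound G hG2
    have h1 : (F.card : ℝ) ≤ (q * C₁ + C₄)/δ := by
      rw [le_div_iff₀ hδ0]
      have h2 : (F.card : ℝ) ≤ (A G : ℝ) := by exact_mod_cast hcard2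
      nlinarith
    have h2 : (q * C₁ + C₄)/δ ≤ (⌈(q * C₁ + C₄)/δ⌉₊ : ℝ) := Nat.le_ceil _
    rw [hFcard] at h1
    push_cast at h1
    linarith
  -- final contradiction
  set ACTF : Finset (Fin k × ℕ) := hfin.toFinset with hACTFdef
  set CHEAPF : Finset (Fin k × ℕ) := Finset.univ ×ˢ Finset.range ⌈μ⌉₊ with hCHEAPdef
  set x : ℝ := 1 + ∑ e ∈ ACTF ∪ CHEAPF, v e with hxdef
  have hsumnn : ∀ e ∈ ACTF ∪ CHEAPF, 0 ≤ v e := fun e _ => le_trans zero_le_one (hv1 e)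
  have hx1 : 1 ≤ x := by
    rw [hxdef]
    have := Finset.sum_nonneg hsumnn
    linarith
  have hxv : ∀ e ∈ ACTF ∪ CHEAPF, v e < x := by
    intro e he
    have := Finset.single_le_sum hsumnn he
    rw [hxdef]
    linarith
  have hq' : q ≤ Set.ncard {p : Fin k × ℕ | x ≤ v p ∧ b p ≤ μ * x} := hcov x hx1
  have hSsub : {p : Fin k × ℕ | x ≤ v p ∧ b p ≤ μ * x} ⊆ {p : Fin k × ℕ | b p = μ * x} := by
    rintro e ⟨h1', h2'⟩
    have hnc : ¬ (b e < μ) := by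
      intro hc
      have h5 : e.2 < ⌈μ⌉₊ := Nat.lt_ceil.mpr (lt_of_le_of_lt (hbi e) hc)
      have heC : e ∈ ACTF ∪ CHEAPF := by
        apply Finset.mem_union_right
        rw [hCHEAPdef, Finset.mem_product, Finset.mem_range]
        exact ⟨Finset.mem_univ _, h5⟩
      have := hxv e heC
      linarith [hv1 e]
    push_neg at hnc
    have hna : ¬ (Cc e < μ * v e) := by
      intro hc
      have heA : e ∈ ACTF := by
        rw [hACTFdef, Set.Finite.mem_toFinset]
        exact ⟨hnc, hc⟩
      have := hxv e (Finset.mem_union_left _ heA)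
      linarith
    push_neg at hna
    have hCe : Cc e = b e := max_eq_left hnc
    rw [hCe] at hna
    have hμx : μ * x ≤ μ * v e := mul_le_mul_of_nonneg_left h1' hμ0.le
    show b e = μ * x
    exact le_antisymm h2' (by linarith)
  have hbstrict' : ∀ (e e' : Fin k × ℕ), e.1 = e'.1 → e.2 < e'.2 → b e + 1 ≤ b e' := by
    intro e e' h12 hlt
    have h := hbstrict e.1 e.2 e'.2 hlt
    rw [Prod.mk.eta, h12, Prod.mk.eta] at h
    exact h
  have hinj : Set.InjOn Prod.fst {p : Fin k × ℕ | x ≤ v p ∧ b p ≤ μ * x} := by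
    intro e he e' he' hfst
    have h1 := hSsub he
    have h2 := hSsub he'
    simp only [Set.mem_setOf_eq] at h1 h2
    have h22 : e.2 = e'.2 := by
      by_contra hne
      rcases Nat.lt_or_ge e.2 e'.2 with hlt | hge
      · have := hbstrict' e e' hfst hlt
        linarith
      · have hlt' : e'.2 < e.2 := by omega
        have := hbstrict' e' e hfst.symm hlt'
        linarith
    exact Prod.ext hfst h22
  have h1 : Set.ncard {p : Fin k × ℕ | x ≤ v p ∧ b p ≤ μ * x}
      = (Prod.fst '' {p : Fin k × ℕ | x ≤ v p ∧ b p ≤ μ * x}).ncard :=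
    (Set.ncard_image_of_injOn hinj).symm
  have h2 : (Prod.fst '' {p : Fin k × ℕ | x ≤ v p ∧ b p ≤ μ * x}).ncard
      ≤ (Set.univ : Set (Fin k)).ncard :=
    Set.ncard_le_ncard (Set.subset_univ _) Set.finite_univ
  have h3 : (Set.univ : Set (Fin k)).ncard = k := by
    rw [Set.ncard_univ, Nat.card_eq_fintype_card, Fintype.card_fin]
  omega

end MainProof
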